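/- arXiv:1412.1701 — 4 statements merged into one kernel-verified Lean document; each statement's English description precedes it below -/
import Mathlib

section
/- Let τ be any test such that, for some δ ∈ (0,1), ∫ τ dP ≤ ∫ τ* dP + δ and ∫ τ dQ ≥ ∫ τ* dQ − δ. Then for every ε > 0, |ν_c|{ |τ − τ*| > ε } ≤ (1 + c) δ / ε. -/
open MeasureTheory Filter Set

noncomputable section

lemma aux_integral_withDensity {Y : Type*} [MeasurableSpace Y] (μ : Measure Y)
    (q τ : Y → ℝ) (hq : Measurable q) (hq0 : ∀ x, 0 ≤ q x) :
    ∫ x, τ x ∂(μ.withDensity fun x => ENNReal.ofReal (q x)) = ∫ x, q x * τ x ∂μ := by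
  have h1 : (fun x => ENNReal.ofReal (q x))
      = fun x => ((Real.toNNReal (q x) : NNReal) : ENNReal) := rfl
  rw [h1, integral_withDensity_eq_integral_smul hq.real_toNNReal τ]
  refine integral_congr_ae (Filter.Eventually.of_forall fun x => ?_)
  simp [NNReal.smul_def, Real.coe_toNNReal _ (hq0 x)]

/-- approximate uniqueness of Neyman–Pearson tests.  If a test `τ` has
almost the same size and power as the Neyman–Pearson test `τ*` with critical value `c`,
then `τ` is close to `τ*` in the total variation measure `|ν_c|` of `dν_c = (q - c·p)dμ`. -/
theorem stmt_13 {Y : Type*} [MeasurableSpace Y] (μ : Measure Y) [SigmaFinite μ]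
    (p q : Y → ℝ) (hp_meas : Measurable p) (hq_meas : Measurable q)
    (hp0 : ∀ x, 0 ≤ p x) (hq0 : ∀ x, 0 ≤ q x)
    (P Q : Measure Y)
    (hP : P = μ.withDensity fun x => ENNReal.ofReal (p x))
    (hQ : Q = μ.withDensity fun x => ENNReal.ofReal (q x))
    (hPprob : IsProbabilityMeasure P) (hQprob : IsProbabilityMeasure Q)
    (c : ℝ) (hc : 0 ≤ c)
    (τ τs : Y → ℝ) (hτ_meas : Measurable τ) (hτs_meas : Measurable τs)
    (hτ_range : ∀ x, τ x ∈ Set.Icc (0 : ℝ) 1)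
    (hτs_range : ∀ x, τs x ∈ Set.Icc (0 : ℝ) 1)
    (hτs_one : ∀ x, c * p x < q x → τs x = 1)
    (hτs_zero : ∀ x, q x < c * p x → τs x = 0)
    (δ : ℝ) (hδ : δ ∈ Set.Ioo (0 : ℝ) 1)
    (hsize : ∫ x, τ x ∂P ≤ ∫ x, τs x ∂P + δ)
    (hpower : ∫ x, τs x ∂Q - δ ≤ ∫ x, τ x ∂Q) :
    ∀ ε : ℝ, 0 < ε →
      (μ.withDensity fun x => ENNReal.ofReal |q x - c * p x|)
          {x | ε < |τ x - τs x|} ≤ ENNReal.ofReal ((1 + c) * δ / ε) := by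
  intro ε hε
  set ν := μ.withDensity fun x => ENNReal.ofReal |q x - c * p x| with hν
  set f : Y → ℝ := fun x => (τs x - τ x) * (q x - c * p x) with hf
  -- integrability of p and q
  have hq_int : Integrable q μ := by
    refine ⟨hq_meas.aestronglyMeasurable, ?_⟩
    have : ∫⁻ x, ‖q x‖ₑ ∂μ = Q Set.univ := by
      rw [hQ, withDensity_apply _ MeasurableSet.univ, setLIntegral_univ]
      exact lintegral_congr fun x => Real.enorm_eq_ofReal (hq0 x)
    rw [HasFiniteIntegral, this]
    exact measure_lt_top _ _
  have hp_int : Integrable p μ := by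
    refine ⟨hp_meas.aestronglyMeasurable, ?_⟩
    have : ∫⁻ x, ‖p x‖ₑ ∂μ = P Set.univ := by
      rw [hP, withDensity_apply _ MeasurableSet.univ, setLIntegral_univ]
      exact lintegral_congr fun x => Real.enorm_eq_ofReal (hp0 x)
    rw [HasFiniteIntegral, this]
    exact measure_lt_top _ _
  -- integrability of products with tests
  have hmono : ∀ (g τ' : Y → ℝ), Measurable g → Measurable τ' → (∀ x, 0 ≤ g x) →
      Integrable g μ → (∀ x, τ' x ∈ Set.Icc (0:ℝ) 1) → Integrable (fun x => g x * τ' x) μ := by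
    intro g τ' hg hτ' hg0 hgi hr
    refine hgi.mono (hg.mul hτ').aestronglyMeasurable (Filter.Eventually.of_forall fun x => ?_)
    have h1 := (hr x).1; have h2 := (hr x).2
    rw [Real.norm_eq_abs, Real.norm_eq_abs, abs_of_nonneg (hg0 x), abs_of_nonneg
      (mul_nonneg (hg0 x) h1)]
    nlinarith [hg0 x]
  have hqτ := hmono q τ hq_meas hτ_meas hq0 hq_int hτ_range
  have hqτs := hmono q τs hq_meas hτs_meas hq0 hq_int hτs_range
  have hpτ := hmono p τ hp_meas hτ_meas hp0 hp_int hτ_range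
  have hpτs := hmono p τs hp_meas hτs_meas hp0 hp_int hτs_range
  -- f integrable and nonneg
  have hf_eq : ∀ x, |τ x - τs x| * |q x - c * p x| = f x := by
    intro x
    simp only [hf]
    rcases lt_trichotomy (q x) (c * p x) with h | h | h
    · have hz := hτs_zero x h
      have h1 := (hτ_range x).1
      rw [abs_of_nonpos (by linarith : q x - c * p x ≤ 0),
        abs_of_nonneg (by rw [hz]; linarith : (0:ℝ) ≤ τ x - τs x), hz]
      ring
    · simp [h]
    · have hz := hτs_one x h
      have h2 := (hτ_range x).2
      rw [abs_of_nonneg (by linarith : (0:ℝ) ≤ q x - c * p x),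
        abs_of_nonpos (by rw [hz]; linarith : τ x - τs x ≤ 0), hz]
      ring
  have hf0 : ∀ x, 0 ≤ f x := fun x => by
    rw [← hf_eq x]; positivity
  have hf_meas : Measurable f := ((hτs_meas.sub hτ_meas).mul
    (hq_meas.sub (measurable_const.mul hp_meas)))
  have hf_int : Integrable f μ := by
    refine (hq_int.add (hp_int.const_mul c)).mono hf_meas.aestronglyMeasurable
      (Filter.Eventually.of_forall fun x => ?_)
    have h1 := (hτ_range x).1; have h2 := (hτ_range x).2
    have h3 := (hτs_range x).1; have h4 := (hτs_range x).2
    simp only [Real.norm_eq_abs, Pi.add_apply]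
    rw [abs_of_nonneg (hf0 x), ← hf_eq x,
      abs_of_nonneg (by nlinarith [hp0 x, hq0 x] : (0:ℝ) ≤ q x + c * p x)]
    have habs : |τ x - τs x| ≤ 1 := abs_le.2 ⟨by linarith, by linarith⟩
    have habs2 : |q x - c * p x| ≤ q x + c * p x := by
      rw [abs_le]; constructor <;> nlinarith [hp0 x, hq0 x]
    nlinarith [abs_nonneg (τ x - τs x), abs_nonneg (q x - c * p x)]
  -- value of ∫ f
  have hfval : ∫ x, f x ∂μ ≤ (1 + c) * δ := by
    have hexp : ∀ x, f x = q x * τs x - c * (p x * τs x) - q x * τ x + c * (p x * τ x) := by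
      intro x; simp only [hf]; ring
    have i1 : Integrable (fun x => q x * τs x - c * (p x * τs x)) μ :=
      hqτs.sub (hpτs.const_mul c)
    have i2 : Integrable (fun x => q x * τs x - c * (p x * τs x) - q x * τ x) μ := i1.sub hqτ
    have i3 : Integrable (fun x => c * (p x * τ x)) μ := hpτ.const_mul c
    have i4 : Integrable (fun x => c * (p x * τs x)) μ := hpτs.const_mul c
    have hsplit : ∫ x, f x ∂μ = ∫ x, q x * τs x ∂μ - c * ∫ x, p x * τs x ∂μ
        - ∫ x, q x * τ x ∂μ + c * ∫ x, p x * τ x ∂μ := by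
      simp only [hexp]
      rw [integral_add i2 i3, integral_sub i1 hqτ, integral_sub hqτs i4,
        integral_const_mul, integral_const_mul]
    rw [hsplit]
    have e1 : ∫ x, τ x ∂Q = ∫ x, q x * τ x ∂μ := by
      rw [hQ]; exact aux_integral_withDensity μ q τ hq_meas hq0
    have e2 : ∫ x, τs x ∂Q = ∫ x, q x * τs x ∂μ := by
      rw [hQ]; exact aux_integral_withDensity μ q τs hq_meas hq0
    have e3 : ∫ x, τ x ∂P = ∫ x, p x * τ x ∂μ := by
      rw [hP]; exact aux_integral_withDensity μ p τ hp_meas hp0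
    have e4 : ∫ x, τs x ∂P = ∫ x, p x * τs x ∂μ := by
      rw [hP]; exact aux_integral_withDensity μ p τs hp_meas hp0
    rw [e1, e2] at hpower
    rw [e3, e4] at hsize
    nlinarith [hδ.1]
  -- Markov inequality
  have hmarkov : ENNReal.ofReal ε * ν {x | ε < |τ x - τs x|}
      ≤ ∫⁻ x, ENNReal.ofReal |τ x - τs x| ∂ν := by
    refine le_trans ?_ (mul_meas_ge_le_lintegral₀
      ((hτ_meas.sub hτs_meas).abs.ennreal_ofReal.aemeasurable) (ENNReal.ofReal ε))
    refine mul_le_mul_right (measure_mono fun x hx => ?_) _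
    exact ENNReal.ofReal_le_ofReal (le_of_lt hx)
  have hlin : ∫⁻ x, ENNReal.ofReal |τ x - τs x| ∂ν = ENNReal.ofReal (∫ x, f x ∂μ) := by
    rw [hν, lintegral_withDensity_eq_lintegral_mul _
      (f := fun x => ENNReal.ofReal |q x - c * p x|)
      (hq_meas.sub (measurable_const.mul hp_meas)).abs.ennreal_ofReal
      (g := fun x => ENNReal.ofReal |τ x - τs x|)
      (hτ_meas.sub hτs_meas).abs.ennreal_ofReal,
      ofReal_integral_eq_lintegral_ofReal hf_int (Filter.Eventually.of_forall hf0)]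
    refine lintegral_congr fun x => ?_
    simp only [Pi.mul_apply]
    rw [← hf_eq x, ENNReal.ofReal_mul (abs_nonneg _), mul_comm]
  have hfinal : ENNReal.ofReal ε * ν {x | ε < |τ x - τs x|} ≤ ENNReal.ofReal ((1 + c) * δ) :=
    hmarkov.trans (by rw [hlin]; exact ENNReal.ofReal_le_ofReal hfval)
  rw [ENNReal.ofReal_div_of_pos hε,
    ENNReal.le_div_iff_mul_le (Or.inl (by simpa using hε)) (Or.inl ENNReal.ofReal_ne_top),
    mul_comm]
  exact hfinal
end
end

section
/- κ̄ ≠ κ̃ if and only if there exists g ∈ C with ⟨κ, g⟩ < ⟨κ̃, g⟩. -/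
open scoped RealInnerProductSpace

/-- the metric projection `κ̃` of `κ` on a nonempty closed convex cone `C`
differs from the orthogonal projection `κ̄` of `κ` on the closed linear span of `C` iff
there is some `g ∈ C` with `⟨κ,g⟩ < ⟨κ̃,g⟩`. -/
theorem stmt_15 {H : Type*} [NormedAddCommGroup H] [InnerProductSpace ℝ H]
    (κ : H) (C : Set H) (hC_ne : C.Nonempty) (hC_closed : IsClosed C)
    (hC_convex : Convex ℝ C) (hC_cone : ∀ x ∈ C, ∀ r : ℝ, 0 ≤ r → r • x ∈ C)
    (κt : H) (hκt_mem : κt ∈ C) (hκt_min : ∀ g ∈ C, ‖κ - κt‖ ≤ ‖κ - g‖)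
    (κb : H) (hκb_mem : κb ∈ (Submodule.span ℝ C).topologicalClosure)
    (hκb_min : ∀ g ∈ (Submodule.span ℝ C).topologicalClosure, ‖κ - κb‖ ≤ ‖κ - g‖) :
    κb ≠ κt ↔ ∃ g ∈ C, ⟪κ, g⟫ < ⟪κt, g⟫ := by
  set L := (Submodule.span ℝ C).topologicalClosure with hL
  have hCL : C ⊆ (L : Set H) := fun x hx =>
    Submodule.le_topologicalClosure _ (Submodule.subset_span hx)
  -- orthogonality of κ - κb to L
  have hbdd : BddBelow (Set.range fun w : (L : Set H) => ‖κ - w‖) :=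
    ⟨0, fun x ⟨w, hw⟩ => hw ▸ norm_nonneg _⟩
  haveI : Nonempty (L : Set H) := ⟨⟨κb, hκb_mem⟩⟩
  have hinfb : ‖κ - κb‖ = ⨅ w : (L : Set H), ‖κ - w‖ :=
    le_antisymm (le_ciInf fun w => hκb_min w w.2) (ciInf_le hbdd ⟨κb, hκb_mem⟩)
  have hbort : ∀ w ∈ L, ⟪κ - κb, w⟫ = 0 :=
    (Submodule.norm_eq_iInf_iff_real_inner_eq_zero L hκb_mem).1 hinfb
  -- variational inequality for κt
  haveI : Nonempty C := ⟨⟨κt, hκt_mem⟩⟩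
  have hbddC : BddBelow (Set.range fun w : C => ‖κ - w‖) :=
    ⟨0, fun x ⟨w, hw⟩ => hw ▸ norm_nonneg _⟩
  have hinft : ‖κ - κt‖ = ⨅ w : C, ‖κ - w‖ :=
    le_antisymm (le_ciInf fun w => hκt_min w w.2) (ciInf_le hbddC ⟨κt, hκt_mem⟩)
  have htle : ∀ g ∈ C, ⟪κ - κt, g - κt⟫ ≤ 0 :=
    (norm_eq_iInf_iff_real_inner_le_zero hC_convex hκt_mem).1 hinft
  -- ⟪κ - κt, κt⟫ = 0
  have h0C : (0 : H) ∈ C := by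
    obtain ⟨x, hx⟩ := hC_ne
    simpa using hC_cone x hx 0 le_rfl
  have h2C : (2 : ℝ) • κt ∈ C := hC_cone κt hκt_mem 2 (by norm_num)
  have ht0 : ⟪κ - κt, κt⟫ = 0 := by
    have h1 := htle 0 h0C
    have h2 := htle _ h2C
    rw [zero_sub, inner_neg_right] at h1
    have : (2 : ℝ) • κt - κt = κt := by
      rw [two_smul]; abel
    rw [this] at h2
    linarith
  constructor
  · intro hne
    by_contra hcon
    push_neg at hcon
    -- ∀ g ∈ C, ⟪κ - κt, g⟫ = 0
    have heq : ∀ g ∈ C, ⟪κ - κt, g⟫ = 0 := by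
      intro g hg
      have h1 : 0 ≤ ⟪κ - κt, g⟫ := by
        rw [inner_sub_left]; linarith [hcon g hg]
      have h2 : ⟪κ - κt, g⟫ ≤ 0 := by
        have := htle g hg
        rw [inner_sub_right, ht0] at this
        linarith
      linarith
    -- extend orthogonality to L
    have htort : ∀ w ∈ L, ⟪κ - κt, w⟫ = 0 := by
      have hker : L ≤ LinearMap.ker (innerSL ℝ (κ - κt) : H →ₗ[ℝ] ℝ) := by
        apply Submodule.topologicalClosure_minimal
        · rw [Submodule.span_le]
          intro g hg
          rw [SetLike.mem_coe, LinearMap.mem_ker]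
          exact heq g hg
        · exact ContinuousLinearMap.isClosed_ker (innerSL ℝ (κ - κt))
      intro w hw
      have := hker hw
      rw [LinearMap.mem_ker] at this
      exact this
    have hmem : κb - κt ∈ L := L.sub_mem hκb_mem (hCL hκt_mem)
    have key : ⟪κb - κt, κb - κt⟫ = 0 := by
      have e1 := hbort _ hmem
      have e2 := htort _ hmem
      have : ⟪(κ - κt) - (κ - κb), κb - κt⟫ = 0 := by
        rw [inner_sub_left, e1, e2]; ring
      have h3 : (κ - κt) - (κ - κb) = κb - κt := by abel
      rwa [h3] at this
    exact hne (sub_eq_zero.mp (inner_self_eq_zero.mp key))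
  · rintro ⟨g, hg, hlt⟩ heq
    have : ⟪κ - κb, g⟫ = 0 := hbort g (hCL hg)
    rw [inner_sub_left, heq] at this
    linarith
end

section
/- For every a ∈ (0,∞), the metric projection of κ onto the closed convex cone { γ₁ g₁ + γ₂ g₂ : γ₁, γ₂ ≥ 0 } in L²(P) (the unique element of the cone closest to κ in L²(P)-norm) equals b₁ g₁ = 2φ(0) g₁; in particular its squared norm equals 4φ(0)² = 2/π. -/
open MeasureTheory Filter Set

noncomputable section

/-- The standard normal distribution function Φ. -/
def Phi (x : ℝ) : ℝ := (ProbabilityTheory.gaussianReal 0 1 (Set.Iic x)).toReal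

variable {X : Type*}

/-- The inner product of `L²(P)`. -/
def ip [MeasurableSpace X] (P : Measure X) (f g : X → ℝ) : ℝ := ∫ x, f x * g x ∂P

/-- The norm of `L²(P)`. -/
def nrm [MeasurableSpace X] (P : Measure X) (f : X → ℝ) : ℝ :=
  Real.sqrt (∫ x, f x ^ 2 ∂P)

/-- The `n`-fold product `Qⁿ` of a measure `Q`. -/
def prodn [MeasurableSpace X] (Q : Measure X) (n : ℕ) : Measure (Fin n → X) :=
  Measure.pi fun _ => Q

/-- Membership in the `L²(P)`-closure of a set of functions. -/
def InL2Closure [MeasurableSpace X] (P : Measure X) (G : Set (X → ℝ)) (f : X → ℝ) : Prop :=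
  ∀ ε > 0, ∃ g ∈ G, ∫ x, (g x - f x) ^ 2 ∂P < ε

/-- `f` is the projection of `κ` onto the `L²(P)`-closure of `G`: it belongs to the
closure and minimizes the `L²(P)`-distance to `κ` among all elements of the closure. -/
def IsL2Projection [MeasurableSpace X] (P : Measure X) (G : Set (X → ℝ))
    (κ f : X → ℝ) : Prop :=
  InL2Closure P G f ∧
    ∀ h : X → ℝ, InL2Closure P G h →
      ∫ x, (κ x - f x) ^ 2 ∂P ≤ ∫ x, (κ x - h x) ^ 2 ∂P

/-- `G` is a convex cone of functions. -/
def IsConvexCone (G : Set (X → ℝ)) : Prop :=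
  ∀ g₁ ∈ G, ∀ g₂ ∈ G, ∀ γ₁ γ₂ : ℝ, 0 ≤ γ₁ → 0 ≤ γ₂ →
    (fun x => γ₁ * g₁ x + γ₂ * g₂ x) ∈ G

/-- `G` is a linear subspace of functions. -/
def IsLinearSubspaceSet (G : Set (X → ℝ)) : Prop :=
  ∀ g₁ ∈ G, ∀ g₂ ∈ G, ∀ γ₁ γ₂ : ℝ, (fun x => γ₁ * g₁ x + γ₂ * g₂ x) ∈ G

/-- A statistical model: a tangent set `G` at `P`, for each tangent a differentiable
path, and a functional `T` differentiable at `P` along `G` with influence curve `κ`. -/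
structure StatModel (X : Type*) [MeasurableSpace X] (P : Measure X) where
  /-- the tangent set -/
  G : Set (X → ℝ)
  tangent_memLp : ∀ g ∈ G, MemLp g 2 P
  tangent_mean : ∀ g ∈ G, ∫ x, g x ∂P = 0
  /-- `path g s = P_{g,s}` -/
  path : (X → ℝ) → ℝ → Measure X
  path_prob : ∀ g ∈ G, ∀ s : ℝ, 0 < s → IsProbabilityMeasure (path g s)
  /-- a common dominating σ-finite measure -/
  μ : Measure X
  μ_sigmaFinite : SigmaFinite μ
  dom_base : P ≪ μ
  dom_path : ∀ g ∈ G, ∀ s : ℝ, 0 < s → path g s ≪ μ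
  /-- `√(dP_{g,s}) = (1 + (s/2) g) √(dP) + o(s)` in `L²(μ)` as `s ↓ 0` -/
  sqrt_diff : ∀ g ∈ G,
    Tendsto (fun s : ℝ =>
        (∫ x, (Real.sqrt ((path g s).rnDeriv μ x).toReal -
            (1 + s / 2 * g x) * Real.sqrt (P.rnDeriv μ x).toReal) ^ 2 ∂μ) / s ^ 2)
      (nhdsWithin 0 (Set.Ioi 0)) (nhds 0)
  /-- the functional -/
  T : Measure X → ℝ
  /-- the influence curve -/
  κ : X → ℝ
  κ_memLp : MemLp κ 2 P
  /-- `T(P_{g,s}) = T(P) + s⟨κ,g⟩ + o(s)` as `s ↓ 0` -/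
  T_diff : ∀ g ∈ G,
    Tendsto (fun s : ℝ => (T (path g s) - T P - s * ip P κ g) / s)
      (nhdsWithin 0 (Set.Ioi 0)) (nhds 0)

/-- The local alternative `P_{n,t,g} = P_{g, t/√n}`. -/
def StatModel.loc [MeasurableSpace X] {P : Measure X} (M : StatModel X P)
    (n : ℕ) (t : ℝ) (g : X → ℝ) : Measure X :=
  M.path g (t / Real.sqrt (n : ℝ))

/-- The one-sided test `1{ n^{-1/2} Σᵢ κ(xᵢ) > ‖κ‖·u }` on `Xⁿ`. -/
def tauTest [MeasurableSpace X] (P : Measure X) (κ : X → ℝ) (u : ℝ) (n : ℕ)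
    (x : Fin n → X) : ℝ :=
  if nrm P κ * u < (∑ i, κ (x i)) / Real.sqrt (n : ℝ) then 1 else 0

/-- The standard normal density `φ`. -/
def stdφ (x : ℝ) : ℝ := (Real.sqrt (2 * Real.pi))⁻¹ * Real.exp (-x ^ 2 / 2)

/-- The standard normal distribution `N(0,1)`. -/
def Pstd : Measure ℝ := ProbabilityTheory.gaussianReal 0 1

/-- `g₁ = sign`. -/
def g1 (x : ℝ) : ℝ := Real.sign x

/-- `μ_a = (2Φ(a) - 1)^{-1/2}`. -/
def μa (a : ℝ) : ℝ := (Real.sqrt (2 * Phi a - 1))⁻¹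

/-- `g₂(x) = μ_a · sign(x) · 1{|x| ≤ a}`. -/
def g2 (a x : ℝ) : ℝ := if |x| ≤ a then μa a * Real.sign x else 0

def b1 : ℝ := 2 * stdφ 0

namespace Stmt18

open scoped ENNReal NNReal

open Real MeasureTheory ProbabilityTheory

lemma stdφ_pos (x : ℝ) : 0 < stdφ x := by
  unfold stdφ
  positivity

lemma stdφ_nonneg (x : ℝ) : 0 ≤ stdφ x := (stdφ_pos x).le

lemma continuous_stdφ : Continuous stdφ := by
  unfold stdφ
  fun_prop

lemma stdφ_even (x : ℝ) : stdφ (-x) = stdφ x := by simp [stdφ]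

lemma stdφ_abs (x : ℝ) : stdφ |x| = stdφ x := by simp [stdφ, sq_abs]

lemma gaussianPDFReal_eq : gaussianPDFReal 0 1 = stdφ := by
  funext x
  simp [gaussianPDFReal, stdφ]

lemma Pstd_eq : Pstd = volume.withDensity (fun x => ((stdφ x).toNNReal : ℝ≥0∞)) := by
  rw [Pstd, gaussianReal_of_var_ne_zero 0 one_ne_zero]
  congr 1
  funext x
  rw [gaussianPDF, gaussianPDFReal_eq]
  rfl

lemma measurable_stdφ_toNNReal : Measurable fun x => (stdφ x).toNNReal :=
  continuous_stdφ.measurable.real_toNNReal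

lemma integral_Pstd (f : ℝ → ℝ) : ∫ x, f x ∂Pstd = ∫ x, stdφ x * f x := by
  rw [Pstd_eq, integral_withDensity_eq_integral_smul measurable_stdφ_toNNReal]
  congr 1
  funext x
  rw [NNReal.smul_def, Real.coe_toNNReal _ (stdφ_nonneg x), smul_eq_mul]

lemma int_stdφ : Integrable stdφ := by
  have := integrable_gaussianPDFReal 0 1
  rwa [gaussianPDFReal_eq] at this

lemma integral_stdφ : ∫ x, stdφ x = 1 := by
  have := integral_gaussianPDFReal_eq_one 0 (one_ne_zero)
  rwa [gaussianPDFReal_eq] at this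

lemma int_xstdφ : Integrable (fun x => stdφ x * x) volume := by
  have h := integrable_rpow_mul_exp_neg_mul_sq (b := (1:ℝ)/2) one_half_pos
    (s := 1) (by norm_num)
  have h2 := h.const_mul ((Real.sqrt (2*Real.pi))⁻¹)
  refine h2.congr (Filter.Eventually.of_forall fun x => ?_)
  simp only [Real.rpow_one]
  rw [show (-(1/2 : ℝ) * x^2) = -x^2/2 by ring]
  unfold stdφ
  ring

lemma int_x2stdφ : Integrable (fun x => stdφ x * x ^ 2) volume := by
  have h := integrable_rpow_mul_exp_neg_mul_sq (b := (1:ℝ)/2) one_half_pos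
    (s := 2) (by norm_num)
  have h2 := h.const_mul ((Real.sqrt (2*Real.pi))⁻¹)
  refine h2.congr (Filter.Eventually.of_forall fun x => ?_)
  have hx2 : x ^ (2:ℝ) = x ^ (2:ℕ) := by
    rw [← Real.rpow_natCast x 2]; norm_num
  simp only [hx2]
  rw [show (-(1/2 : ℝ) * x^2) = -x^2/2 by ring]
  unfold stdφ
  ring

lemma int_dom {F : ℝ → ℝ} (hm : AEStronglyMeasurable F volume) {C : ℝ}
    (hC : ∀ x, |F x| ≤ C * (1 + x ^ 2)) :
    Integrable (fun x => stdφ x * F x) volume := by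
  have hint : Integrable (fun x => C * (stdφ x * (1 + x ^ 2))) volume := by
    have h := (int_stdφ.add int_x2stdφ).const_mul C
    refine h.congr (Filter.Eventually.of_forall fun x => ?_)
    simp only [Pi.add_apply]
    ring
  refine hint.mono' (continuous_stdφ.aestronglyMeasurable.mul hm)
    (Filter.Eventually.of_forall fun x => ?_)
  rw [Real.norm_eq_abs, abs_mul, abs_of_nonneg (stdφ_nonneg x)]
  calc stdφ x * |F x| ≤ stdφ x * (C * (1 + x ^ 2)) :=
        mul_le_mul_of_nonneg_left (hC x) (stdφ_nonneg x)
    _ = C * (stdφ x * (1 + x ^ 2)) := by ring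

lemma measurable_sign : Measurable Real.sign := by
  unfold Real.sign
  refine Measurable.ite (measurableSet_lt measurable_id measurable_const)
    measurable_const ?_
  exact Measurable.ite (measurableSet_lt measurable_const measurable_id)
    measurable_const measurable_const

lemma measurable_g1 : Measurable g1 := measurable_sign

lemma measurable_g2 (a : ℝ) : Measurable (g2 a) := by
  unfold g2
  refine Measurable.ite ?_ (measurable_const.mul measurable_sign) measurable_const
  exact measurableSet_le (continuous_abs.measurable) measurable_const

lemma abs_sign_le (x : ℝ) : |Real.sign x| ≤ 1 := by
  rcases Real.sign_apply_eq x with h | h | h <;> rw [h] <;> norm_num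

lemma abs_g1_le (x : ℝ) : |g1 x| ≤ 1 := abs_sign_le x

lemma mul_sign (x : ℝ) : x * Real.sign x = |x| := by
  rcases lt_trichotomy x 0 with h | h | h
  · rw [Real.sign_of_neg h, abs_of_neg h]; ring
  · simp [h]
  · rw [Real.sign_of_pos h, abs_of_pos h]; ring

lemma sign_sq_of_ne (x : ℝ) (hx : x ≠ 0) : Real.sign x ^ 2 = 1 := by
  rcases Real.sign_apply_eq_of_ne_zero x hx with h | h <;> rw [h] <;> norm_num

lemma μa_nonneg (a : ℝ) : 0 ≤ μa a := by
  unfold μa; positivity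

lemma abs_g2_le (a : ℝ) (x : ℝ) : |g2 a x| ≤ μa a := by
  unfold g2
  by_cases h : |x| ≤ a
  · rw [if_pos h, abs_mul, abs_of_nonneg (μa_nonneg a)]
    calc μa a * |Real.sign x| ≤ μa a * 1 :=
          mul_le_mul_of_nonneg_left (abs_sign_le x) (μa_nonneg a)
      _ = μa a := mul_one _
  · rw [if_neg h, abs_zero]; exact μa_nonneg a

lemma hasDerivAt_negstdφ (x : ℝ) : HasDerivAt (fun y => -stdφ y) (stdφ x * x) x := by
  have h1 : HasDerivAt (fun y : ℝ => -y ^ 2 / 2) (-x) x := by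
    have h := (hasDerivAt_pow 2 x).neg.div_const 2
    refine h.congr_deriv ?_
    simp
    ring
  have h2 := h1.exp
  have h3 := (h2.const_mul ((Real.sqrt (2 * Real.pi))⁻¹)).neg
  refine h3.congr_deriv ?_
  unfold stdφ
  ring

lemma tendsto_negstdφ : Filter.Tendsto (fun y => -stdφ y) Filter.atTop (nhds 0) := by
  have h0 : Filter.Tendsto (fun y : ℝ => -y ^ 2 / 2) Filter.atTop Filter.atBot := by
    apply Filter.Tendsto.atBot_div_const (by norm_num : (0:ℝ) < 2)
    exact Filter.tendsto_neg_atBot_iff.mpr (tendsto_pow_atTop two_ne_zero)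
  have h1 : Filter.Tendsto (fun y : ℝ => Real.exp (-y ^ 2 / 2)) Filter.atTop (nhds 0) :=
    Real.tendsto_exp_atBot.comp h0
  have h2 := (h1.const_mul ((Real.sqrt (2 * Real.pi))⁻¹)).neg
  simpa [stdφ] using h2

lemma integral_Ioi_xstdφ (b : ℝ) : ∫ x in Ioi b, stdφ x * x = stdφ b := by
  have h := MeasureTheory.integral_Ioi_of_hasDerivAt_of_tendsto
    (f := fun y => -stdφ y) (f' := fun x => stdφ x * x) (a := b)
    (continuous_stdφ.neg.continuousWithinAt)
    (fun x _ => hasDerivAt_negstdφ x) (int_xstdφ.integrableOn) tendsto_negstdφ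
  simpa using h

lemma integral_Ioc_xstdφ {l u : ℝ} (h : l ≤ u) :
    ∫ x in Ioc l u, stdφ x * x = stdφ l - stdφ u := by
  rw [← intervalIntegral.integral_of_le h,
    intervalIntegral.integral_eq_sub_of_hasDerivAt
      (fun x _ => hasDerivAt_negstdφ x) (int_xstdφ.intervalIntegrable)]
  ring

lemma Phi_eq (b : ℝ) : Phi b = ∫ x in Iic b, stdφ x := by
  rw [Phi, gaussianReal_apply_eq_integral 0 one_ne_zero, gaussianPDFReal_eq,
    ENNReal.toReal_ofReal (setIntegral_nonneg measurableSet_Iic fun x _ => stdφ_nonneg x)]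

lemma integral_Iic_add_Ioi_stdφ (b : ℝ) :
    (∫ x in Iic b, stdφ x) + ∫ x in Ioi b, stdφ x = 1 := by
  have h := MeasureTheory.integral_add_compl (measurableSet_Iic (a := b)) int_stdφ
  rwa [compl_Iic, integral_stdφ] at h

lemma integral_Ioi_stdφ (b : ℝ) : ∫ x in Ioi b, stdφ x = 1 - Phi b := by
  have := integral_Iic_add_Ioi_stdφ b
  rw [Phi_eq]
  linarith

lemma Phi_zero : Phi 0 = 1 / 2 := by
  have hsym : ∫ x in Iic (0:ℝ), stdφ x = ∫ x in Ioi (0:ℝ), stdφ x := by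
    have h := integral_comp_neg_Iic (0:ℝ) stdφ
    simp only [stdφ_even, neg_zero] at h
    exact h
  have h2 := integral_Iic_add_Ioi_stdφ 0
  rw [Phi_eq]
  linarith

lemma Phi_le_one (b : ℝ) : Phi b ≤ 1 := by
  have := integral_Ioi_stdφ b
  have h2 : 0 ≤ ∫ x in Ioi b, stdφ x :=
    setIntegral_nonneg measurableSet_Ioi fun x _ => stdφ_nonneg x
  linarith

lemma integral_Ioc_stdφ {a : ℝ} (ha : 0 ≤ a) :
    ∫ x in Ioc 0 a, stdφ x = Phi a - 1 / 2 := by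
  have hd : Disjoint (Iic (0:ℝ)) (Ioc 0 a) :=
    (Iic_disjoint_Ioi le_rfl).mono_right Ioc_subset_Ioi_self
  have hu := MeasureTheory.setIntegral_union hd measurableSet_Ioc
    int_stdφ.integrableOn int_stdφ.integrableOn (f := stdφ)
  rw [Iic_union_Ioc_eq_Iic ha] at hu
  have h1 := Phi_eq a
  have h0 := Phi_zero
  have h00 := Phi_eq 0
  linarith

lemma tm_pos {a : ℝ} (ha : 0 < a) : 0 < 2 * Phi a - 1 := by
  have h : 0 < ∫ x in Ioc 0 a, stdφ x := by
    rw [← intervalIntegral.integral_of_le ha.le]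
    exact intervalIntegral.intervalIntegral_pos_of_pos_on
      (int_stdφ.intervalIntegrable) (fun x _ => stdφ_pos x) ha
  rw [integral_Ioc_stdφ ha.le] at h
  linarith

lemma μa_sq_tm {a : ℝ} (ha : 0 < a) : μa a ^ 2 * (2 * Phi a - 1) = 1 := by
  have h := tm_pos ha
  rw [μa, inv_pow, Real.sq_sqrt h.le]
  field_simp

lemma c_eq_sqrt {a : ℝ} (ha : 0 < a) :
    μa a * (2 * Phi a - 1) = Real.sqrt (2 * Phi a - 1) := by
  rw [μa, inv_mul_eq_div, Real.div_sqrt]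

lemma c_le_one {a : ℝ} (ha : 0 < a) : μa a * (2 * Phi a - 1) ≤ 1 := by
  rw [c_eq_sqrt ha]
  have h1 : Real.sqrt (2 * Phi a - 1) ≤ Real.sqrt 1 :=
    Real.sqrt_le_sqrt (by have := Phi_le_one a; linarith)
  rwa [Real.sqrt_one] at h1

lemma c_nonneg (a : ℝ) : 0 ≤ μa a * (2 * Phi a - 1) ∨ True := Or.inr trivial

-- the six Lebesgue integrals
lemma L1 : ∫ x, stdφ x * (x * g1 x) = 2 * stdφ 0 := by
  have h : ∀ x : ℝ, stdφ x * (x * g1 x) = (fun t => stdφ t * t) |x| := by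
    intro x
    show stdφ x * (x * Real.sign x) = stdφ |x| * |x|
    rw [mul_sign x, stdφ_abs x]
  calc ∫ x, stdφ x * (x * g1 x) = ∫ x, (fun t => stdφ t * t) |x| := by
        exact integral_congr_ae (Filter.Eventually.of_forall h)
    _ = 2 * ∫ t in Ioi (0:ℝ), stdφ t * t := integral_comp_abs (f := fun t => stdφ t * t)
    _ = 2 * stdφ 0 := by rw [integral_Ioi_xstdφ 0]

lemma L2 {a : ℝ} (ha : 0 < a) :
    ∫ x, stdφ x * (x * g2 a x) = 2 * μa a * (stdφ 0 - stdφ a) := by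
  have h : ∀ x : ℝ, stdφ x * (x * g2 a x)
      = (fun t => if t ≤ a then μa a * (stdφ t * t) else 0) |x| := by
    intro x
    show stdφ x * (x * (if |x| ≤ a then μa a * Real.sign x else 0))
        = if |x| ≤ a then μa a * (stdφ |x| * |x|) else 0
    by_cases hc : |x| ≤ a
    · rw [if_pos hc, if_pos hc, stdφ_abs x, ← mul_sign x]; ring
    · rw [if_neg hc, if_neg hc]; ring
  calc ∫ x, stdφ x * (x * g2 a x)
      = ∫ x, (fun t => if t ≤ a then μa a * (stdφ t * t) else 0) |x| :=
        integral_congr_ae (Filter.Eventually.of_forall h)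
    _ = 2 * ∫ t in Ioi (0:ℝ), if t ≤ a then μa a * (stdφ t * t) else 0 :=
        integral_comp_abs (f := fun t => if t ≤ a then μa a * (stdφ t * t) else 0)
    _ = 2 * ∫ t in Ioi (0:ℝ), (Iic a).indicator (fun t => μa a * (stdφ t * t)) t := by
        have hind : ∀ t : ℝ, (fun t : ℝ => if t ≤ a then μa a * (stdφ t * t) else 0) t
            = (Iic a).indicator (fun t => μa a * (stdφ t * t)) t := fun t => by
          simp [Set.indicator_apply]
        simp_rw [hind]
    _ = 2 * ∫ t in Ioi (0:ℝ) ∩ Iic a, μa a * (stdφ t * t) := by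
        rw [setIntegral_indicator measurableSet_Iic]
    _ = 2 * (μa a * ∫ t in Ioc (0:ℝ) a, stdφ t * t) := by
        rw [Set.Ioi_inter_Iic, integral_const_mul]
    _ = 2 * μa a * (stdφ 0 - stdφ a) := by
        rw [integral_Ioc_xstdφ ha.le]; ring

lemma ae_ne_zero : ∀ᵐ x : ℝ ∂volume, x ≠ 0 := by
  have h : volume ({0} : Set ℝ) = 0 := Real.volume_singleton
  rw [MeasureTheory.ae_iff]
  convert h using 2
  ext x
  simp

lemma L3 : ∫ x, stdφ x * g1 x ^ 2 = 1 := by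
  have hae : (fun x => stdφ x * g1 x ^ 2) =ᵐ[volume] stdφ := by
    filter_upwards [ae_ne_zero] with x hx
    show stdφ x * Real.sign x ^ 2 = stdφ x
    rw [sign_sq_of_ne x hx, mul_one]
  rw [integral_congr_ae hae, integral_stdφ]

lemma L4 {a : ℝ} (ha : 0 < a) :
    ∫ x, stdφ x * g2 a x ^ 2 = μa a ^ 2 * (2 * Phi a - 1) := by
  have hae : (fun x => stdφ x * g2 a x ^ 2)
      =ᵐ[volume] fun x => (fun t => if t ≤ a then μa a ^ 2 * stdφ t else 0) |x| := by
    filter_upwards [ae_ne_zero] with x hx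
    show stdφ x * (if |x| ≤ a then μa a * Real.sign x else 0) ^ 2
        = if |x| ≤ a then μa a ^ 2 * stdφ |x| else 0
    by_cases hc : |x| ≤ a
    · rw [if_pos hc, if_pos hc, stdφ_abs x, mul_pow, sign_sq_of_ne x hx]; ring
    · rw [if_neg hc, if_neg hc]; ring
  calc ∫ x, stdφ x * g2 a x ^ 2
      = ∫ x, (fun t => if t ≤ a then μa a ^ 2 * stdφ t else 0) |x| :=
        integral_congr_ae hae
    _ = 2 * ∫ t in Ioi (0:ℝ), if t ≤ a then μa a ^ 2 * stdφ t else 0 :=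
        integral_comp_abs (f := fun t => if t ≤ a then μa a ^ 2 * stdφ t else 0)
    _ = 2 * ∫ t in Ioi (0:ℝ), (Iic a).indicator (fun t => μa a ^ 2 * stdφ t) t := by
        have hind : ∀ t : ℝ, (fun t : ℝ => if t ≤ a then μa a ^ 2 * stdφ t else 0) t
            = (Iic a).indicator (fun t => μa a ^ 2 * stdφ t) t := fun t => by
          simp [Set.indicator_apply]
        simp_rw [hind]
    _ = 2 * ∫ t in Ioi (0:ℝ) ∩ Iic a, μa a ^ 2 * stdφ t := by
        rw [setIntegral_indicator measurableSet_Iic]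
    _ = 2 * (μa a ^ 2 * ∫ t in Ioc (0:ℝ) a, stdφ t) := by
        rw [Set.Ioi_inter_Iic, integral_const_mul]
    _ = μa a ^ 2 * (2 * Phi a - 1) := by
        rw [integral_Ioc_stdφ ha.le]; ring

lemma L5 {a : ℝ} (ha : 0 < a) :
    ∫ x, stdφ x * (g1 x * g2 a x) = μa a * (2 * Phi a - 1) := by
  have hae : (fun x => stdφ x * (g1 x * g2 a x))
      =ᵐ[volume] fun x => (fun t => if t ≤ a then μa a * stdφ t else 0) |x| := by
    filter_upwards [ae_ne_zero] with x hx
    show stdφ x * (Real.sign x * (if |x| ≤ a then μa a * Real.sign x else 0))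
        = if |x| ≤ a then μa a * stdφ |x| else 0
    by_cases hc : |x| ≤ a
    · rw [if_pos hc, if_pos hc, stdφ_abs x]
      have : Real.sign x * (μa a * Real.sign x) = μa a * Real.sign x ^ 2 := by ring
      rw [this, sign_sq_of_ne x hx]; ring
    · rw [if_neg hc, if_neg hc]; ring
  calc ∫ x, stdφ x * (g1 x * g2 a x)
      = ∫ x, (fun t => if t ≤ a then μa a * stdφ t else 0) |x| :=
        integral_congr_ae hae
    _ = 2 * ∫ t in Ioi (0:ℝ), if t ≤ a then μa a * stdφ t else 0 :=
        integral_comp_abs (f := fun t => if t ≤ a then μa a * stdφ t else 0)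
    _ = 2 * ∫ t in Ioi (0:ℝ), (Iic a).indicator (fun t => μa a * stdφ t) t := by
        have hind : ∀ t : ℝ, (fun t : ℝ => if t ≤ a then μa a * stdφ t else 0) t
            = (Iic a).indicator (fun t => μa a * stdφ t) t := fun t => by
          simp [Set.indicator_apply]
        simp_rw [hind]
    _ = 2 * ∫ t in Ioi (0:ℝ) ∩ Iic a, μa a * stdφ t := by
        rw [setIntegral_indicator measurableSet_Iic]
    _ = 2 * (μa a * ∫ t in Ioc (0:ℝ) a, stdφ t) := by
        rw [Set.Ioi_inter_Iic, integral_const_mul]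
    _ = μa a * (2 * Phi a - 1) := by
        rw [integral_Ioc_stdφ ha.le]; ring

-- integrabilities of the six pieces
lemma intF0 : Integrable (fun x => stdφ x * x ^ 2) volume := int_x2stdφ

lemma abs_le_one_add_sq (x : ℝ) : |x| ≤ 1 + x ^ 2 := by
  nlinarith [sq_nonneg (|x| - 1), sq_abs x, abs_nonneg x]

lemma intF1 : Integrable (fun x => stdφ x * (x * g1 x)) volume := by
  refine int_dom ((measurable_id.mul measurable_g1).aestronglyMeasurable) (C := 1) fun x => ?_
  rw [abs_mul, one_mul]
  calc |x| * |g1 x| ≤ |x| * 1 := mul_le_mul_of_nonneg_left (abs_g1_le x) (abs_nonneg x)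
    _ = |x| := mul_one _
    _ ≤ 1 + x ^ 2 := abs_le_one_add_sq x

lemma intF2 (a : ℝ) : Integrable (fun x => stdφ x * (x * g2 a x)) volume := by
  refine int_dom ((measurable_id.mul (measurable_g2 a)).aestronglyMeasurable)
    (C := μa a) fun x => ?_
  rw [abs_mul]
  calc |x| * |g2 a x| ≤ |x| * μa a := mul_le_mul_of_nonneg_left (abs_g2_le a x) (abs_nonneg x)
    _ = μa a * |x| := mul_comm _ _
    _ ≤ μa a * (1 + x ^ 2) := mul_le_mul_of_nonneg_left (abs_le_one_add_sq x) (μa_nonneg a)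

lemma intF3 : Integrable (fun x => stdφ x * g1 x ^ 2) volume := by
  refine int_dom ((measurable_g1.pow_const 2).aestronglyMeasurable) (C := 1) fun x => ?_
  rw [one_mul, abs_pow]
  nlinarith [abs_g1_le x, abs_nonneg (g1 x), sq_nonneg x]

lemma intF4 (a : ℝ) : Integrable (fun x => stdφ x * g2 a x ^ 2) volume := by
  refine int_dom (((measurable_g2 a).pow_const 2).aestronglyMeasurable)
    (C := μa a ^ 2) fun x => ?_
  rw [abs_pow]
  nlinarith [abs_g2_le a x, abs_nonneg (g2 a x), sq_nonneg x, sq_nonneg (μa a)]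

lemma intF5 (a : ℝ) : Integrable (fun x => stdφ x * (g1 x * g2 a x)) volume := by
  refine int_dom ((measurable_g1.mul (measurable_g2 a)).aestronglyMeasurable)
    (C := μa a) fun x => ?_
  rw [abs_mul]
  calc |g1 x| * |g2 a x| ≤ 1 * μa a := by
        exact mul_le_mul (abs_g1_le x) (abs_g2_le a x) (abs_nonneg _) zero_le_one
    _ = μa a * 1 := by ring
    _ ≤ μa a * (1 + x ^ 2) := by nlinarith [μa_nonneg a, sq_nonneg x]

lemma expand {a : ℝ} (ha : 0 < a) (γ₁ γ₂ : ℝ) :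
    ∫ x, (x - (γ₁ * g1 x + γ₂ * g2 a x)) ^ 2 ∂Pstd
      = (∫ x, stdφ x * x ^ 2) - 2 * γ₁ * (2 * stdφ 0)
        - 2 * γ₂ * (2 * μa a * (stdφ 0 - stdφ a))
        + γ₁ ^ 2 + γ₂ ^ 2 + 2 * γ₁ * γ₂ * (μa a * (2 * Phi a - 1)) := by
  rw [integral_Pstd]
  have key : (fun x => stdφ x * (x - (γ₁ * g1 x + γ₂ * g2 a x)) ^ 2)
      = fun x => stdφ x * x ^ 2 + ((-(2 * γ₁)) * (stdφ x * (x * g1 x))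
        + ((-(2 * γ₂)) * (stdφ x * (x * g2 a x))
        + (γ₁ ^ 2 * (stdφ x * g1 x ^ 2)
        + (γ₂ ^ 2 * (stdφ x * g2 a x ^ 2)
        + (2 * γ₁ * γ₂) * (stdφ x * (g1 x * g2 a x)))))) := by
    funext x
    ring
  rw [key]
  have i5 : Integrable (fun x => (2 * γ₁ * γ₂) * (stdφ x * (g1 x * g2 a x))) volume :=
    (intF5 a).const_mul _
  have i4 : Integrable (fun x => γ₂ ^ 2 * (stdφ x * g2 a x ^ 2)) volume :=
    (intF4 a).const_mul _
  have i3 : Integrable (fun x => γ₁ ^ 2 * (stdφ x * g1 x ^ 2)) volume :=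
    intF3.const_mul _
  have i2 : Integrable (fun x => (-(2 * γ₂)) * (stdφ x * (x * g2 a x))) volume :=
    (intF2 a).const_mul _
  have i1 : Integrable (fun x => (-(2 * γ₁)) * (stdφ x * (x * g1 x))) volume :=
    intF1.const_mul _
  have i45 : Integrable (fun x => γ₂ ^ 2 * (stdφ x * g2 a x ^ 2)
      + (2 * γ₁ * γ₂) * (stdφ x * (g1 x * g2 a x))) volume := i4.add i5
  have i345 : Integrable (fun x => γ₁ ^ 2 * (stdφ x * g1 x ^ 2)
      + (γ₂ ^ 2 * (stdφ x * g2 a x ^ 2)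
      + (2 * γ₁ * γ₂) * (stdφ x * (g1 x * g2 a x)))) volume := i3.add i45
  have i2345 : Integrable (fun x => (-(2 * γ₂)) * (stdφ x * (x * g2 a x))
      + (γ₁ ^ 2 * (stdφ x * g1 x ^ 2)
      + (γ₂ ^ 2 * (stdφ x * g2 a x ^ 2)
      + (2 * γ₁ * γ₂) * (stdφ x * (g1 x * g2 a x))))) volume := i2.add i345
  have i12345 : Integrable (fun x => (-(2 * γ₁)) * (stdφ x * (x * g1 x))
      + ((-(2 * γ₂)) * (stdφ x * (x * g2 a x))
      + (γ₁ ^ 2 * (stdφ x * g1 x ^ 2)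
      + (γ₂ ^ 2 * (stdφ x * g2 a x ^ 2)
      + (2 * γ₁ * γ₂) * (stdφ x * (g1 x * g2 a x)))))) volume := i1.add i2345
  rw [MeasureTheory.integral_add intF0 i12345,
    MeasureTheory.integral_add i1 i2345,
    MeasureTheory.integral_add i2 i345,
    MeasureTheory.integral_add i3 i45,
    MeasureTheory.integral_add i4 i5,
    integral_const_mul, integral_const_mul,
    integral_const_mul, integral_const_mul,
    integral_const_mul,
    L1, L2 ha, L3, L4 ha, L5 ha, μa_sq_tm ha]
  ring

lemma int_h : Integrable (fun x => stdφ x * x - 2 * stdφ 0 * stdφ x) volume :=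
  int_xstdφ.sub (int_stdφ.const_mul _)

lemma G_eq (b : ℝ) :
    ∫ x in Ioi b, (stdφ x * x - 2 * stdφ 0 * stdφ x)
      = stdφ b - 2 * stdφ 0 * (1 - Phi b) := by
  rw [MeasureTheory.integral_sub int_xstdφ.integrableOn
      ((int_stdφ.const_mul (2 * stdφ 0)).integrableOn),
    integral_Ioi_xstdφ b, integral_const_mul, integral_Ioi_stdφ b]

lemma G_nonneg {a : ℝ} (ha : 0 < a) :
    0 ≤ ∫ x in Ioi a, (stdφ x * x - 2 * stdφ 0 * stdφ x) := by
  rcases le_or_gt (2 * stdφ 0) a with hk | hk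
  · refine setIntegral_nonneg measurableSet_Ioi fun x hx => ?_
    have hx' : (2 : ℝ) * stdφ 0 ≤ x := le_of_lt (lt_of_le_of_lt hk hx)
    nlinarith [stdφ_nonneg x]
  · have hsplit : (∫ x in Ioc 0 a, (stdφ x * x - 2 * stdφ 0 * stdφ x))
        + ∫ x in Ioi a, (stdφ x * x - 2 * stdφ 0 * stdφ x)
        = ∫ x in Ioi (0:ℝ), (stdφ x * x - 2 * stdφ 0 * stdφ x) := by
      rw [← MeasureTheory.setIntegral_union (Ioc_disjoint_Ioi le_rfl)
        measurableSet_Ioi int_h.integrableOn int_h.integrableOn,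
        Ioc_union_Ioi_eq_Ioi ha.le]
    have hG0 : ∫ x in Ioi (0:ℝ), (stdφ x * x - 2 * stdφ 0 * stdφ x) = 0 := by
      rw [G_eq 0, Phi_zero]; ring
    have hneg : ∫ x in Ioc 0 a, (stdφ x * x - 2 * stdφ 0 * stdφ x) ≤ 0 := by
      refine setIntegral_nonpos measurableSet_Ioc fun x hx => ?_
      have h1 : x ≤ 2 * stdφ 0 := le_of_lt (lt_of_le_of_lt hx.2 hk)
      nlinarith [stdφ_nonneg x]
    linarith

lemma key_ineq {a : ℝ} (ha : 0 < a) :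
    2 * μa a * (stdφ 0 - stdφ a) ≤ (μa a * (2 * Phi a - 1)) * (2 * stdφ 0) := by
  have hG := G_nonneg ha
  rw [G_eq a] at hG
  have hbase : 2 * (stdφ 0 - stdφ a) ≤ (2 * Phi a - 1) * (2 * stdφ 0) := by nlinarith
  calc 2 * μa a * (stdφ 0 - stdφ a) = μa a * (2 * (stdφ 0 - stdφ a)) := by ring
    _ ≤ μa a * ((2 * Phi a - 1) * (2 * stdφ 0)) :=
        mul_le_mul_of_nonneg_left hbase (μa_nonneg a)
    _ = (μa a * (2 * Phi a - 1)) * (2 * stdφ 0) := by ring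

lemma c_nonneg' {a : ℝ} (ha : 0 < a) : 0 ≤ μa a * (2 * Phi a - 1) :=
  mul_nonneg (μa_nonneg a) (tm_pos ha).le

lemma sqnorm : ∫ x, (b1 * g1 x) ^ 2 ∂Pstd = 4 * stdφ 0 ^ 2 := by
  rw [integral_Pstd]
  calc ∫ x, stdφ x * (b1 * g1 x) ^ 2 = ∫ x, b1 ^ 2 * (stdφ x * g1 x ^ 2) := by
        congr 1; funext x; ring
    _ = b1 ^ 2 * 1 := by rw [integral_const_mul, L3]
    _ = 4 * stdφ 0 ^ 2 := by unfold b1; ring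

lemma sqnorm_val : (4 : ℝ) * stdφ 0 ^ 2 = 2 / Real.pi := by
  have h0 : stdφ 0 = (Real.sqrt (2 * Real.pi))⁻¹ := by simp [stdφ]
  rw [h0, inv_pow, Real.sq_sqrt (by positivity : (0:ℝ) ≤ 2 * Real.pi)]
  have hpi := Real.pi_ne_zero
  field_simp
  ring

end Stmt18

/-- in `L²(N(0,1))`, with `κ(x) = x`, the metric projection of `κ` onto
the closed convex cone `{γ₁g₁ + γ₂g₂ : γ₁, γ₂ ≥ 0}` is `b₁g₁ = 2φ(0)g₁`, whose squared
norm is `4φ(0)² = 2/π`. -/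

theorem stmt_18 (a : ℝ) (ha : 0 < a) :
    (fun x => b1 * g1 x) ∈
      {f : ℝ → ℝ | ∃ γ₁ γ₂ : ℝ, 0 ≤ γ₁ ∧ 0 ≤ γ₂ ∧
        f = fun x => γ₁ * g1 x + γ₂ * g2 a x} ∧
    (∀ f ∈ {f : ℝ → ℝ | ∃ γ₁ γ₂ : ℝ, 0 ≤ γ₁ ∧ 0 ≤ γ₂ ∧
        f = fun x => γ₁ * g1 x + γ₂ * g2 a x},
      ∫ x, (x - b1 * g1 x) ^ 2 ∂Pstd ≤ ∫ x, (x - f x) ^ 2 ∂Pstd) ∧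
    ∫ x, (b1 * g1 x) ^ 2 ∂Pstd = 4 * stdφ 0 ^ 2 ∧
    ∫ x, (b1 * g1 x) ^ 2 ∂Pstd = 2 / Real.pi := by
  have hb1 : (0:ℝ) ≤ b1 := by have := Stmt18.stdφ_pos 0; unfold b1; linarith
  refine ⟨⟨b1, 0, hb1, le_refl 0, by funext x; ring⟩, ?_, Stmt18.sqnorm,
    by rw [Stmt18.sqnorm, Stmt18.sqnorm_val]⟩
  rintro f ⟨γ₁, γ₂, hγ₁, hγ₂, rfl⟩
  have hL : ∫ x, (x - b1 * g1 x) ^ 2 ∂Pstd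
      = ∫ x, (x - (b1 * g1 x + 0 * g2 a x)) ^ 2 ∂Pstd := by
    congr 1; funext x; ring
  rw [hL, Stmt18.expand ha b1 0, Stmt18.expand ha γ₁ γ₂]
  set I := ∫ x, stdφ x * x ^ 2 with hI
  set c := μa a * (2 * Phi a - 1) with hc
  set B := 2 * μa a * (stdφ 0 - stdφ a) with hB
  have hb1' : b1 = 2 * stdφ 0 := rfl
  have hkey : B ≤ c * b1 := by
    rw [hb1']; exact Stmt18.key_ineq ha
  have hc0 : 0 ≤ c := Stmt18.c_nonneg' ha
  have hc1 : c ≤ 1 := Stmt18.c_le_one ha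
  rw [← hb1']
  rcases le_or_gt b1 γ₁ with hcase | hcase
  · nlinarith [sq_nonneg (γ₁ - b1), sq_nonneg γ₂,
      mul_nonneg hγ₂ (sub_nonneg.mpr hkey),
      mul_nonneg (mul_nonneg hγ₂ hc0) (sub_nonneg.mpr hcase)]
  · nlinarith [sq_nonneg (γ₁ - b1 + γ₂),
      mul_nonneg hγ₂ (sub_nonneg.mpr hkey),
      mul_nonneg (mul_nonneg hγ₂ (sub_nonneg.mpr hc1)) (sub_nonneg.mpr hcase.le)]
end
end

section
/- Let P be a probability measure on ℝ whose distribution function F is continuous and symmetric, i.e. F(−x) = 1 − F(x) for all x > 0. For ρ, q ∈ L²((0,1), Lebesgue) define κ_P(x) = sign(x)·ρ(2F(|x|) − 1) and g(x) = sign(x)·q(2F(|x|) − 1) (with sign(0) = 0). Then ∫ g dP = 0, ∫ κ_P·g dP = ∫₀¹ ρ(s) q(s) ds, and ∫ (κ_P − g)² dP = ∫₀¹ (ρ(s) − q(s))² ds; in particular ‖κ_P − g‖_{L²(P)} = ‖ρ − q‖_{L²(0,1)}. -/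
open MeasureTheory Set

lemma measurable_real_sign : Measurable Real.sign := by
  unfold Real.sign
  exact (measurable_const.ite (measurableSet_lt measurable_id measurable_const)
    (measurable_const.ite (measurableSet_lt measurable_const measurable_id) measurable_const))

/-- invariance identities for signed-rank tangents and influence curves.
For a continuous symmetric `P` on `ℝ`, the functions `κ_P(x) = sign(x)·ρ(2F(|x|)-1)`
and `g(x) = sign(x)·q(2F(|x|)-1)` satisfy `∫ g dP = 0`,
`∫ κ_P·g dP = ∫₀¹ ρ·q`, and `∫ (κ_P - g)² dP = ∫₀¹ (ρ - q)²`. -/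
theorem stmt_19 (P : Measure ℝ) [IsProbabilityMeasure P]
    (F : ℝ → ℝ) (hF : F = fun x => (P (Set.Iic x)).toReal)
    (hF_cont : Continuous F)
    (hF_sym : ∀ x : ℝ, 0 < x → F (-x) = 1 - F x)
    (ρ q : ℝ → ℝ)
    (hρ : MemLp ρ 2 (volume.restrict (Set.Ioo (0 : ℝ) 1)))
    (hq : MemLp q 2 (volume.restrict (Set.Ioo (0 : ℝ) 1)))
    (κP g : ℝ → ℝ)
    (hκP : κP = fun x => Real.sign x * ρ (2 * F |x| - 1))
    (hg : g = fun x => Real.sign x * q (2 * F |x| - 1)) :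
    ∫ x, g x ∂P = 0 ∧
    ∫ x, κP x * g x ∂P = ∫ s in Set.Ioo (0 : ℝ) 1, ρ s * q s ∧
    ∫ x, (κP x - g x) ^ 2 ∂P = ∫ s in Set.Ioo (0 : ℝ) 1, (ρ s - q s) ^ 2 ∧
    Real.sqrt (∫ x, (κP x - g x) ^ 2 ∂P) =
      Real.sqrt (∫ s in Set.Ioo (0 : ℝ) 1, (ρ s - q s) ^ 2) := by
  -- basic facts about F
  have hFapp : ∀ x, P (Iic x) = ENNReal.ofReal (F x) := by
    intro x; rw [hF]; simp [ENNReal.ofReal_toReal (measure_ne_top P _)]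
  have hmono : Monotone F := by
    intro a b hab
    rw [hF]
    exact ENNReal.toReal_le_toReal (measure_ne_top _ _) (measure_ne_top _ _) |>.mpr
      (measure_mono (Iic_subset_Iic.mpr hab))
  have hF01 : ∀ x, 0 ≤ F x ∧ F x ≤ 1 := by
    intro x
    rw [hF]
    refine ⟨ENNReal.toReal_nonneg, ?_⟩
    have : P (Iic x) ≤ 1 := prob_le_one
    simpa using ENNReal.toReal_le_toReal (measure_ne_top _ _) (by simp) |>.mpr this
  -- no atoms
  have hatom : ∀ x : ℝ, P {x} = 0 := by
    intro x
    have key : ∀ ε > (0:ℝ), (P {x}).toReal ≤ F x - F (x - ε) := by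
      intro ε hε
      have hsub : {x} ⊆ Ioc (x - ε) x := by
        intro y hy; simp at hy; subst hy; constructor <;> linarith
      have h1 : P {x} ≤ P (Ioc (x - ε) x) := measure_mono hsub
      have h2 : P (Ioc (x - ε) x) = P (Iic x) - P (Iic (x - ε)) := by
        rw [← Iic_sdiff_Iic, measure_diff (Iic_subset_Iic.mpr (by linarith))
          nullMeasurableSet_Iic (measure_ne_top _ _)]
      have h3 : (P (Ioc (x - ε) x)).toReal = F x - F (x - ε) := by
        rw [h2, ENNReal.toReal_sub_of_le (measure_mono (Iic_subset_Iic.mpr (by linarith)))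
          (measure_ne_top _ _), hF]
      rw [← h3]
      exact ENNReal.toReal_le_toReal (measure_ne_top _ _) (measure_ne_top _ _) |>.mpr h1
    have hlim : Filter.Tendsto (fun ε => F x - F (x - ε)) (nhdsWithin 0 (Ioi 0)) (nhds 0) := by
      have : Filter.Tendsto (fun ε : ℝ => F x - F (x - ε)) (nhds 0) (nhds (F x - F (x - 0))) :=
        (tendsto_const_nhds.sub ((hF_cont.tendsto _).comp (tendsto_const_nhds.sub Filter.tendsto_id)))
      simpa using this.mono_left nhdsWithin_le_nhds
    have hle : (P {x}).toReal ≤ 0 := by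
      refine ge_of_tendsto hlim ?_
      filter_upwards [self_mem_nhdsWithin] with ε hε using key ε hε
    have h0 : (P {x}).toReal = 0 := le_antisymm hle ENNReal.toReal_nonneg
    exact (ENNReal.toReal_eq_zero_iff _).mp h0 |>.resolve_right (measure_ne_top _ _)
  haveI : NullSingletonClass P := ⟨hatom⟩
  -- F 0 = 1/2 and full symmetry
  have hF0 : F 0 = 1 / 2 := by
    have h1 : Filter.Tendsto (fun x : ℝ => F (-x)) (nhdsWithin 0 (Ioi 0)) (nhds (F 0)) := by
      have : Filter.Tendsto (fun x : ℝ => F (-x)) (nhds 0) (nhds (F (-0))) :=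
        (hF_cont.tendsto _).comp (Filter.tendsto_id.neg)
      simpa using this.mono_left nhdsWithin_le_nhds
    have h2 : Filter.Tendsto (fun x : ℝ => 1 - F x) (nhdsWithin 0 (Ioi 0)) (nhds (1 - F 0)) := by
      have : Filter.Tendsto (fun x : ℝ => 1 - F x) (nhds 0) (nhds (1 - F 0)) :=
        tendsto_const_nhds.sub (hF_cont.tendsto _)
      exact this.mono_left nhdsWithin_le_nhds
    have heq : F 0 = 1 - F 0 := by
      refine tendsto_nhds_unique (h1.congr' ?_) h2
      filter_upwards [self_mem_nhdsWithin] with x hx using hF_sym x hx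
    linarith
  have hsym : ∀ x : ℝ, F (-x) = 1 - F x := by
    intro x
    rcases lt_trichotomy x 0 with hx | hx | hx
    · have := hF_sym (-x) (by linarith)
      simp only [neg_neg] at this
      linarith
    · subst hx; rw [neg_zero, hF0]; norm_num
    · exact hF_sym x hx
  -- F tends to 1 at infinity
  have htop : Filter.Tendsto F Filter.atTop (nhds 1) := by
    have h1 : Filter.Tendsto (fun x => P (Iic x)) Filter.atTop (nhds (P univ)) :=
      tendsto_measure_Iic_atTop P
    have h2 := (ENNReal.tendsto_toReal (measure_ne_top P univ)).comp h1
    rw [hF]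
    simpa [measure_univ, Function.comp_def] using h2
  -- the pushforward map
  set φ : ℝ → ℝ := fun x => 2 * F |x| - 1 with hφ
  have hφ_cont : Continuous φ :=
    (continuous_const.mul (hF_cont.comp continuous_abs)).sub continuous_const
  have hmap : Measure.map φ P = volume.restrict (Ioo (0:ℝ) 1) := by
    haveI : IsProbabilityMeasure (Measure.map φ P) :=
      Measure.isProbabilityMeasure_map hφ_cont.measurable.aemeasurable
    refine Measure.ext_of_Iic _ _ (fun u => ?_)
    rw [Measure.map_apply hφ_cont.measurable measurableSet_Iic,
      Measure.restrict_apply measurableSet_Iic]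
    rcases lt_or_ge u 0 with hu | hu
    · have h1 : φ ⁻¹' Iic u = ∅ := by
        ext x
        simp only [mem_preimage, mem_Iic, mem_empty_iff_false, iff_false, not_le]
        have : F 0 ≤ F |x| := hmono (abs_nonneg x)
        simp only [hφ]
        rw [hF0] at this
        linarith
      have h2 : Iic u ∩ Ioo (0:ℝ) 1 = ∅ := by
        ext x; simp only [mem_inter_iff, mem_Iic, mem_Ioo, mem_empty_iff_false, iff_false]
        rintro ⟨h, h', _⟩; linarith
      rw [h1, h2]; simp
    rcases le_or_gt 1 u with hu1 | hu1
    · have h1 : φ ⁻¹' Iic u = univ := by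
        ext x
        simp only [mem_preimage, mem_Iic, mem_univ, iff_true, hφ]
        have := (hF01 |x|).2
        linarith
      have h2 : Iic u ∩ Ioo (0:ℝ) 1 = Ioo 0 1 := by
        apply inter_eq_self_of_subset_right
        intro x hx; exact le_trans hx.2.le hu1
      rw [h1, h2, measure_univ, Real.volume_Ioo]
      norm_num
    · -- 0 ≤ u < 1
      set t : ℝ := (u + 1) / 2 with ht
      have ht1 : t < 1 := by rw [ht]; linarith
      have ht2 : 1 / 2 ≤ t := by rw [ht]; linarith
      -- find M with t < F M
      obtain ⟨M, hM⟩ : ∃ M, t < F M :=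
        (htop.eventually (eventually_gt_nhds ht1)).exists
      set S : Set ℝ := {y | F y ≤ t} with hS
      have hS_closed : IsClosed S := isClosed_le hF_cont continuous_const
      have hS_ne : S.Nonempty := ⟨0, by simpa [hS, hF0] using ht2⟩
      have hS_bdd : BddAbove S := by
        refine ⟨M, fun y hy => ?_⟩
        by_contra hyM
        push_neg at hyM
        exact absurd (hy.trans_lt (hM.trans_le (hmono hyM.le))) (lt_irrefl _)
      set a : ℝ := sSup S with ha
      have haS : a ∈ S := hS_closed.csSup_mem hS_ne hS_bdd
      have ha_nonneg : 0 ≤ a := le_csSup hS_bdd (by simpa [hS, hF0] using ht2)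
      have hFa : F a = t := by
        refine le_antisymm haS ?_
        have h0M : (0:ℝ) ≤ M := by
          by_contra h
          push_neg at h
          have : F M ≤ F 0 := hmono h.le
          rw [hF0] at this; linarith
        obtain ⟨y, hy_mem, hy⟩ := intermediate_value_Icc h0M hF_cont.continuousOn
          (show t ∈ Icc (F 0) (F M) from ⟨by rw [hF0]; exact ht2, hM.le⟩)
        have : y ≤ a := le_csSup hS_bdd (by simp [hS, hy.le])
        calc t = F y := hy.symm
          _ ≤ F a := hmono this
      have hpre : φ ⁻¹' Iic u = Icc (-a) a := by
        ext x
        simp only [mem_preimage, mem_Iic, hφ, mem_Icc]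
        constructor
        · intro h
          have hxS : |x| ∈ S := by
            simp only [hS, mem_setOf_eq, ht]
            linarith
          have := le_csSup hS_bdd hxS
          exact abs_le.mp this
        · intro h
          have : F |x| ≤ F a := hmono (abs_le.mpr h)
          rw [hFa, ht] at this
          linarith
      rw [hpre]
      have hIcc : P (Icc (-a) a) = P (Ioc (-a) a) := (measure_congr (Ioc_ae_eq_Icc)).symm
      have hIoc : P (Ioc (-a) a) = P (Iic a) - P (Iic (-a)) := by
        rw [← Iic_sdiff_Iic, measure_diff (Iic_subset_Iic.mpr (by linarith))
          nullMeasurableSet_Iic (measure_ne_top _ _)]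
      have hFna : F (-a) = 1 - F a := hsym a
      have hval : P (Icc (-a) a) = ENNReal.ofReal u := by
        rw [hIcc, hIoc, hFapp, hFapp, hFna, hFa,
          ← ENNReal.ofReal_sub _ (by linarith : (0:ℝ) ≤ 1 - t)]
        congr 1
        rw [ht]; ring
      rw [hval]
      have hIcc2 : Iic u ∩ Ioo (0:ℝ) 1 = Ioc 0 u := by
        ext x
        simp only [mem_inter_iff, mem_Iic, mem_Ioo, mem_Ioc]
        constructor
        · rintro ⟨h1, h2, h3⟩; exact ⟨h2, h1⟩
        · rintro ⟨h1, h2⟩; exact ⟨h2, h1, lt_of_le_of_lt h2 hu1⟩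
      rw [hIcc2, Real.volume_Ioc]
      congr 1
      simp
  -- symmetry of P: map neg P = P
  have hneg : Measure.map (fun x : ℝ => -x) P = P := by
    haveI : IsProbabilityMeasure (Measure.map (fun x : ℝ => -x) P) :=
      Measure.isProbabilityMeasure_map measurable_neg.aemeasurable
    refine Measure.ext_of_Iic _ _ (fun a => ?_)
    rw [Measure.map_apply measurable_neg measurableSet_Iic]
    have hpre : (fun x : ℝ => -x) ⁻¹' Iic a = Ici (-a) := by
      ext x; simp only [mem_preimage, mem_Iic, mem_Ici]; constructor <;> intro h <;> linarith
    rw [hpre]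
    have h1 : P (Ici (-a)) = P (Ioi (-a)) := (measure_congr (Ioi_ae_eq_Ici)).symm
    have h2 : P (Ioi (-a)) = P univ - P (Iic (-a)) := by
      rw [← measure_compl measurableSet_Iic (measure_ne_top _ _), compl_Iic]
    rw [h1, h2, measure_univ, hFapp, hFapp, hsym,
      ← ENNReal.ofReal_one, ← ENNReal.ofReal_sub _ (by linarith [(hF01 a).2] : (0:ℝ) ≤ 1 - F a)]
    congr 1
    ring
  -- measurability
  have hqm : AEStronglyMeasurable (fun x => q (φ x)) P := by
    have : AEStronglyMeasurable q (Measure.map φ P) := by rw [hmap]; exact hq.1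
    exact this.comp_aemeasurable hφ_cont.measurable.aemeasurable
  have hρm : AEStronglyMeasurable (fun x => ρ (φ x)) P := by
    have : AEStronglyMeasurable ρ (Measure.map φ P) := by rw [hmap]; exact hρ.1
    exact this.comp_aemeasurable hφ_cont.measurable.aemeasurable
  have hgm : AEStronglyMeasurable g P := by
    rw [hg]
    exact (measurable_real_sign.aestronglyMeasurable).mul hqm
  -- a.e. nonzero and sign squared
  have hne : ∀ᵐ x ∂P, x ≠ (0:ℝ) := by
    rw [ae_iff]
    simp [hatom 0]
  have hsign_sq : ∀ x : ℝ, x ≠ 0 → Real.sign x * Real.sign x = 1 := by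
    intro x hx
    rcases Real.sign_apply_eq_of_ne_zero x hx with h | h <;> rw [h] <;> norm_num
  -- part 1
  have part1 : ∫ x, g x ∂P = 0 := by
    have h1 : ∫ x, g x ∂P = ∫ x, g (-x) ∂P := by
      conv_lhs => rw [← hneg]
      rw [integral_map measurable_neg.aemeasurable (by rw [hneg]; exact hgm)]
    have h2 : ∀ x : ℝ, g (-x) = - g x := by
      intro x
      rw [hg]
      simp only [Real.sign_neg, abs_neg, neg_mul]
    have h3 : ∫ x, g (-x) ∂P = - ∫ x, g x ∂P := by
      simp_rw [h2]
      exact integral_neg _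
    have := h1.trans h3
    linarith
  -- part 2
  have part2 : ∫ x, κP x * g x ∂P = ∫ s in Set.Ioo (0 : ℝ) 1, ρ s * q s := by
    have hae : (fun x => κP x * g x) =ᵐ[P] (fun x => ρ (φ x) * q (φ x)) := by
      filter_upwards [hne] with x hx
      rw [hκP, hg]
      simp only [hφ]
      have h := hsign_sq x hx
      have heq : (Real.sign x * ρ (2 * F |x| - 1)) * (Real.sign x * q (2 * F |x| - 1))
          = (Real.sign x * Real.sign x) * (ρ (2 * F |x| - 1) * q (2 * F |x| - 1)) := by
        ring
      rw [heq, h, one_mul]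
    rw [integral_congr_ae hae]
    have hmeas : AEStronglyMeasurable (fun s => ρ s * q s) (Measure.map φ P) := by
      rw [hmap]; exact hρ.1.mul hq.1
    rw [← integral_map hφ_cont.measurable.aemeasurable hmeas, hmap]
  -- part 3
  have part3 : ∫ x, (κP x - g x) ^ 2 ∂P = ∫ s in Set.Ioo (0 : ℝ) 1, (ρ s - q s) ^ 2 := by
    have hae : (fun x => (κP x - g x) ^ 2) =ᵐ[P] (fun x => (ρ (φ x) - q (φ x)) ^ 2) := by
      filter_upwards [hne] with x hx
      rw [hκP, hg]
      simp only [hφ]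
      have h := hsign_sq x hx
      have : (Real.sign x * ρ (2 * F |x| - 1) - Real.sign x * q (2 * F |x| - 1)) ^ 2
          = (Real.sign x * Real.sign x) * (ρ (2 * F |x| - 1) - q (2 * F |x| - 1)) ^ 2 := by
        ring
      rw [this, h, one_mul]
    rw [integral_congr_ae hae]
    have hmeas : AEStronglyMeasurable (fun s => (ρ s - q s) ^ 2) (Measure.map φ P) := by
      rw [hmap]
      have := (hρ.1.sub hq.1)
      simpa [pow_two, Pi.mul_def, Pi.sub_apply] using this.mul this
    rw [← integral_map hφ_cont.measurable.aemeasurable hmeas, hmap]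
  exact ⟨part1, part2, part3, by rw [part3]⟩
end
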